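/- Let L > 0, let κ₀ : ℝ/Lℤ → ℝ be a continuous L-periodic function with ∫₀^L κ₀(σ) dσ = 2π, and let u : ℝ/Lℤ → ℝ be a twice continuously differentiable L-periodic function with sup_σ |u(σ)·κ₀(σ)| < 1. Then, with S(u) := √(u_σ² + (1−uκ₀)²) and κ(u) := S(u)^{−3}·[(1−uκ₀)·u_{σσ} + 2κ₀·u_σ² + (κ₀)_σ·u_σ·u + κ₀·(1−uκ₀)²], one has the Gauss–Bonnet identity ∫₀^L κ(u)(σ)·S(u)(σ) dσ = 2π. -/

import Mathlib

open Set MeasureTheory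

/-- The arc-length element `S(u) = √(u_σ² + (1 - u·κ0)²)` of the normal graph `u` over a
reference curve with curvature `κ0`. -/
noncomputable def arcEl (κ0 u : ℝ → ℝ) (σ : ℝ) : ℝ :=
  Real.sqrt ((deriv u σ)^2 + (1 - u σ * κ0 σ)^2)

/-- The signed curvature `κ(u)` of the normal graph `u` over a reference curve with
curvature `κ0`. -/
noncomputable def curvOf (κ0 u : ℝ → ℝ) (σ : ℝ) : ℝ :=
  ((1 - u σ * κ0 σ) * deriv (deriv u) σ + 2 * κ0 σ * (deriv u σ)^2
      + deriv κ0 σ * deriv u σ * u σ + κ0 σ * (1 - u σ * κ0 σ)^2) / (arcEl κ0 u σ)^3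

/-- Gauss–Bonnet identity `∫ κ(u)·S(u) dσ = 2π` for an L-periodic C² normal
graph `u` over a C¹ reference curve of length `L`, total curvature `2π`, with
`sup|u·κ0| < 1`. -/
theorem stmt_3 (L : ℝ) (hL : 0 < L) (κ0 u : ℝ → ℝ)
    (hκreg : ContDiff ℝ 1 κ0) (hκper : Function.Periodic κ0 L)
    (hκint : (∫ σ in (0:ℝ)..L, κ0 σ) = 2 * Real.pi)
    (hureg : ContDiff ℝ 2 u) (huper : Function.Periodic u L)
    (hsmall : ∃ c < (1:ℝ), ∀ σ, |u σ * κ0 σ| ≤ c) :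
    (∫ σ in (0:ℝ)..L, curvOf κ0 u σ * arcEl κ0 u σ) = 2 * Real.pi := by
  obtain ⟨c, hc1, hc⟩ := hsmall
  -- basic regularity
  have hu2 : ContDiff ℝ (1 + 1) u := by norm_num; exact hureg
  have hudiff : Differentiable ℝ u := (contDiff_succ_iff_deriv.mp hu2).1
  have hdu : ContDiff ℝ 1 (deriv u) := (contDiff_succ_iff_deriv.mp hu2).2.2
  have hdudiff : Differentiable ℝ (deriv u) := hdu.differentiable one_ne_zero
  have hκ1 : ContDiff ℝ (0 + 1) κ0 := by norm_num; exact hκreg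
  have hκdiff : Differentiable ℝ κ0 := (contDiff_succ_iff_deriv.mp hκ1).1
  have hdκc : Continuous (deriv κ0) := (contDiff_succ_iff_deriv.mp hκ1).2.2.continuous
  have hduc : Continuous (deriv u) := hdu.continuous
  have hdduc : Continuous (deriv (deriv u)) := (contDiff_one_iff_deriv.mp hdu).2
  have huc : Continuous u := hudiff.continuous
  have hκc : Continuous κ0 := hκdiff.continuous
  -- positivity of a = 1 - u κ0
  have hA : ∀ σ, 0 < 1 - u σ * κ0 σ := fun σ => by
    have := (abs_le.mp (hc σ)).2
    linarith
  have hAne : ∀ σ, (1 - u σ * κ0 σ) ≠ 0 := fun σ => (hA σ).ne'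
  -- the angle function
  set g : ℝ → ℝ := fun σ => Real.arctan (deriv u σ / (1 - u σ * κ0 σ)) with hg
  set G : ℝ → ℝ := fun σ =>
    (deriv (deriv u) σ * (1 - u σ * κ0 σ) -
      deriv u σ * (-(deriv u σ * κ0 σ + u σ * deriv κ0 σ))) /
    ((1 - u σ * κ0 σ)^2 + (deriv u σ)^2) with hG
  have hden : ∀ σ, (1 - u σ * κ0 σ)^2 + (deriv u σ)^2 ≠ 0 := fun σ =>
    (add_pos_of_pos_of_nonneg (pow_pos (hA σ) 2) (sq_nonneg _)).ne'
  have hgderiv : ∀ σ, HasDerivAt g (G σ) σ := by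
    intro σ
    have ha : HasDerivAt (fun σ => 1 - u σ * κ0 σ)
        (-(deriv u σ * κ0 σ + u σ * deriv κ0 σ)) σ := by
      exact ((hudiff σ).hasDerivAt.mul (hκdiff σ).hasDerivAt).const_sub 1
    have hb : HasDerivAt (deriv u) (deriv (deriv u) σ) σ := (hdudiff σ).hasDerivAt
    have hdiv := hb.div ha (hAne σ)
    have harc := (Real.hasDerivAt_arctan (deriv u σ / (1 - u σ * κ0 σ))).comp σ hdiv
    refine harc.congr_deriv ?_
    symm
    rw [hG]
    have h1 : (1 - u σ * κ0 σ) ≠ 0 := hAne σ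
    have h1' : ((1 - u σ * κ0 σ))^2 ≠ 0 := pow_ne_zero _ h1
    have key : 1 + (deriv u σ / (1 - u σ * κ0 σ))^2
        = ((1 - u σ * κ0 σ)^2 + (deriv u σ)^2) / (1 - u σ * κ0 σ)^2 := by
      field_simp
    rw [key, one_div_div, div_mul_div_comm,
      mul_comm ((1 - u σ * κ0 σ)^2 + (deriv u σ)^2) ((1 - u σ * κ0 σ)^2),
      mul_div_mul_left _ _ h1']
  -- pointwise identity: κ(u)·S(u) = κ0 + G
  have hpt : ∀ σ, curvOf κ0 u σ * arcEl κ0 u σ = κ0 σ + G σ := by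
    intro σ
    have hS2 : (arcEl κ0 u σ)^2 = (deriv u σ)^2 + (1 - u σ * κ0 σ)^2 :=
      Real.sq_sqrt (by positivity)
    have hSpos : 0 < arcEl κ0 u σ :=
      Real.sqrt_pos.mpr (add_pos_of_nonneg_of_pos (sq_nonneg _) (pow_pos (hA σ) 2))
    have h3 : (arcEl κ0 u σ)^3 = arcEl κ0 u σ * ((deriv u σ)^2 + (1 - u σ * κ0 σ)^2) := by
      rw [← hS2]; ring
    rw [curvOf, hG, div_mul_eq_mul_div, h3, mul_comm _ (arcEl κ0 u σ),
      mul_div_mul_left _ _ hSpos.ne']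
    rw [add_div' _ _ _ (hden σ),
      div_eq_div_iff (by rw [add_comm]; exact hden σ) (hden σ)]
    ring
  -- continuity of G
  have hGc : Continuous G := by
    rw [hG]
    exact ((hdduc.mul (continuous_const.sub (huc.mul hκc))).sub
      (hduc.mul (((hduc.mul hκc).add (huc.mul hdκc)).neg))).div
      (((continuous_const.sub (huc.mul hκc)).pow 2).add (hduc.pow 2)) hden
  -- integral of G over a period vanishes
  have hderivg : deriv g = G := funext fun σ => (hgderiv σ).deriv
  have hgper : g L = g 0 := by
    have h1 : u L = u 0 := by simpa using huper 0
    have h2 : κ0 L = κ0 0 := by simpa using hκper 0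
    have h3 : deriv u L = deriv u 0 := by
      have : deriv (fun x => u (x + L)) 0 = deriv u (0 + L) := deriv_comp_add_const u L 0
      rw [funext huper] at this
      simpa using this.symm
    simp [hg, h1, h2, h3]
  have hGint : (∫ σ in (0:ℝ)..L, G σ) = 0 := by
    have := intervalIntegral.integral_deriv_eq_sub
      (f := g) (a := 0) (b := L)
      (fun x _ => (hgderiv x).differentiableAt)
      (by rw [hderivg]; exact hGc.intervalIntegrable _ _)
    rw [hderivg] at this
    rw [this, hgper, sub_self]
  -- conclude
  rw [intervalIntegral.integral_congr (g := fun σ => κ0 σ + G σ) (fun σ _ => hpt σ),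
    intervalIntegral.integral_add (hκc.intervalIntegrable _ _) (hGc.intervalIntegrable _ _),
    hκint, hGint, add_zero]
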